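/- Let G be a symmetric N×N real matrix and K an n×n real matrix with K + Kᵀ positive semidefinite. Then the minimum eigenvalue of the symmetric matrix ((G ⊗ K) + (G ⊗ K)ᵀ)/2 is at least −|λ_min(G)|·‖K‖₂, provided λ_min(G) < 0. -/

import Mathlib

open Matrix Kronecker

private lemma kron_posSemidef {N n : ℕ} {A : Matrix (Fin N) (Fin N) ℝ}
    {B : Matrix (Fin n) (Fin n) ℝ} (hA : A.PosSemidef) (hB : B.PosSemidef) :
    (A ⊗ₖ B).PosSemidef := by
  exact hA.kronecker hB

private lemma sub_smul_one_psd {N : ℕ} {G : Matrix (Fin N) (Fin N) ℝ} (hG : G.IsHermitian)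
    (l : ℝ) (hl : ∀ i, l ≤ hG.eigenvalues i) : (G - l • 1).PosSemidef := by
  set U : Matrix (Fin N) (Fin N) ℝ := (hG.eigenvectorUnitary : Matrix (Fin N) (Fin N) ℝ) with hUdef
  have hU : U * star U = 1 := (Matrix.mem_unitaryGroup_iff).mp hG.eigenvectorUnitary.2
  have h2 : l • (1 : Matrix (Fin N) (Fin N) ℝ) = U * (l • 1) * star U := by
    rw [mul_smul_comm, mul_one, smul_mul_assoc, hU]
  have h1 : G - l • 1 = U * diagonal (fun i => hG.eigenvalues i - l) * star U := by
    conv_lhs => rw [hG.spectral_theorem, Unitary.conjStarAlgAut_apply, h2]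
    rw [← sub_mul, ← mul_sub, smul_one_eq_diagonal, ← diagonal_sub]
    rfl
  rw [h1]
  exact (posSemidef_diagonal_iff.mpr fun i => sub_nonneg.mpr (hl i)).mul_mul_conjTranspose_same U

private lemma one_kron_quad {N n : ℕ} (S : Matrix (Fin n) (Fin n) ℝ) (v : Fin N × Fin n → ℝ) :
    v ⬝ᵥ (((1 : Matrix (Fin N) (Fin N) ℝ) ⊗ₖ S) *ᵥ v)
      = ∑ i : Fin N, (fun k => v (i, k)) ⬝ᵥ (S *ᵥ fun k => v (i, k)) := by
  simp only [dotProduct, mulVec, Fintype.sum_prod_type, kroneckerMap_apply, Matrix.one_apply,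
    ite_mul, one_mul, zero_mul]
  refine Finset.sum_congr rfl fun i _ => Finset.sum_congr rfl fun k _ => ?_
  rw [Finset.sum_comm]
  simp [Finset.mul_sum]

private lemma quad_le_opNorm {n : ℕ} (K : Matrix (Fin n) (Fin n) ℝ) (x : Fin n → ℝ) :
    x ⬝ᵥ (K *ᵥ x) ≤ ‖Matrix.toEuclideanCLM (𝕜 := ℝ) K‖ * (x ⬝ᵥ x) := by
  set T := Matrix.toEuclideanCLM (𝕜 := ℝ) K
  set x' : EuclideanSpace ℝ (Fin n) := (WithLp.equiv 2 _).symm x with hx'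
  have h1 : x ⬝ᵥ (K *ᵥ x) = inner ℝ x' (T x') := by
    rw [EuclideanSpace.inner_eq_star_dotProduct]
    simp [T, x', dotProduct, mulVec, mul_comm]
  have hn : ‖x'‖ * ‖x'‖ = x ⬝ᵥ x := by
    rw [← real_inner_self_eq_norm_mul_norm, EuclideanSpace.inner_eq_star_dotProduct]
    simp [x', dotProduct]
  have h2 : inner ℝ x' (T x') ≤ ‖T‖ * (x ⬝ᵥ x) := by
    calc inner ℝ x' (T x') ≤ ‖x'‖ * ‖T x'‖ := real_inner_le_norm _ _
    _ ≤ ‖x'‖ * (‖T‖ * ‖x'‖) :=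
        mul_le_mul_of_nonneg_left (T.le_opNorm x') (norm_nonneg _)
    _ = ‖T‖ * (‖x'‖ * ‖x'‖) := by ring
    _ = ‖T‖ * (x ⬝ᵥ x) := by rw [hn]
  linarith [h1 ▸ h2]

/-- If `G = Gᵀ` with `λ_min(G) < 0` and `K + Kᵀ ⪰ 0`, then every
eigenvalue `μ` of the symmetric matrix `((G ⊗ K) + (G ⊗ K)ᵀ)/2` satisfies
`μ ≥ -|λ_min(G)| ⬝ ‖K‖₂`. -/
theorem stmt4 (N n : ℕ) (hN : 0 < N) (G : Matrix (Fin N) (Fin N) ℝ)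
    (K : Matrix (Fin n) (Fin n) ℝ) (hG : G.IsHermitian)
    (hK : (K + Kᵀ).PosSemidef)
    (hmin : Finset.univ.inf' (Finset.univ_nonempty_iff.mpr ⟨⟨0, hN⟩⟩) hG.eigenvalues < 0)
    (μ : ℝ) (v : Fin N × Fin n → ℝ) (hv : v ≠ 0)
    (hμ : ((1 / 2 : ℝ) • (G ⊗ₖ K + (G ⊗ₖ K)ᵀ)).mulVec v = μ • v) :
    -(|Finset.univ.inf' (Finset.univ_nonempty_iff.mpr ⟨⟨0, hN⟩⟩) hG.eigenvalues| *
        ‖Matrix.toEuclideanCLM (𝕜 := ℝ) K‖) ≤ μ := by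
  set lam := Finset.univ.inf' (Finset.univ_nonempty_iff.mpr ⟨⟨0, hN⟩⟩) hG.eigenvalues with hlam
  set c := ‖Matrix.toEuclideanCLM (𝕜 := ℝ) K‖ with hc
  have hc0 : 0 ≤ c := norm_nonneg _
  have hlam_le : ∀ i, lam ≤ hG.eigenvalues i := fun i => Finset.inf'_le _ (Finset.mem_univ i)
  set S : Matrix (Fin n) (Fin n) ℝ := (1 / 2 : ℝ) • (K + Kᵀ) with hSdef
  -- the symmetric matrix equals `G ⊗ₖ S`
  have hGT : Gᵀ = G := by
    rw [← conjTranspose_eq_transpose_of_trivial]; exact hG.eq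
  have hM : (1 / 2 : ℝ) • (G ⊗ₖ K + (G ⊗ₖ K)ᵀ) = G ⊗ₖ S := by
    rw [hSdef, kronecker_smul, kronecker_add, ← kroneckerMap_transpose, hGT]
  rw [hM] at hμ
  -- `S` is positive semidefinite
  have hS : S.PosSemidef := by
    refine .of_dotProduct_mulVec_nonneg ?_ fun x => ?_
    · rw [hSdef, IsHermitian, conjTranspose_smul, hK.1, star_trivial]
    · have h := hK.dotProduct_mulVec_nonneg x
      simp only [star_trivial] at h ⊢
      simp only [hSdef, smul_mulVec, dotProduct_smul, smul_eq_mul]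
      linarith
  -- quadratic form identity for the eigenvector
  have hvv : (0:ℝ) < v ⬝ᵥ v := by
    rcases lt_or_eq_of_le (Finset.sum_nonneg fun i _ => mul_self_nonneg (v i)) with h | h
    · exact h
    · exact absurd (dotProduct_self_eq_zero.mp h.symm) hv
  have hQ : v ⬝ᵥ ((G ⊗ₖ S) *ᵥ v) = μ * (v ⬝ᵥ v) := by
    rw [hμ, dotProduct_smul, smul_eq_mul]
  -- positivity of the shifted quadratic form
  have hGsub : (G - lam • 1).PosSemidef := sub_smul_one_psd hG lam hlam_le
  have h0 : 0 ≤ v ⬝ᵥ (((G - lam • (1 : Matrix (Fin N) (Fin N) ℝ)) ⊗ₖ S) *ᵥ v) := by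
    have := (kron_posSemidef hGsub hS).dotProduct_mulVec_nonneg v
    simpa using this
  have hsplit : (G - lam • (1 : Matrix (Fin N) (Fin N) ℝ)) ⊗ₖ S
      = G ⊗ₖ S - lam • ((1 : Matrix (Fin N) (Fin N) ℝ) ⊗ₖ S) := by
    ext ⟨i, k⟩ ⟨j, l⟩
    by_cases hij : i = j <;>
      simp [kroneckerMap_apply, Matrix.sub_apply, Matrix.smul_apply, Matrix.one_apply, hij,
        sub_mul]
  rw [hsplit, sub_mulVec, dotProduct_sub, smul_mulVec, dotProduct_smul, smul_eq_mul,
    one_kron_quad, hQ] at h0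
  -- bound on the block sums
  have hq_le : ∀ i : Fin N, (fun k => v (i, k)) ⬝ᵥ (S *ᵥ fun k => v (i, k))
      ≤ c * ((fun k => v (i, k)) ⬝ᵥ (fun k => v (i, k))) := by
    intro i
    set x : Fin n → ℝ := fun k => v (i, k)
    have hSx : x ⬝ᵥ (S *ᵥ x) = x ⬝ᵥ (K *ᵥ x) := by
      have ht : x ⬝ᵥ (Kᵀ *ᵥ x) = x ⬝ᵥ (K *ᵥ x) := by
        rw [dotProduct_mulVec, vecMul_transpose, dotProduct_comm]
      simp only [hSdef, smul_mulVec, dotProduct_smul, smul_eq_mul, add_mulVec,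
        dotProduct_add, ht]
      ring
    rw [hSx]
    exact quad_le_opNorm K x
  have hsum_le : ∑ i : Fin N, (fun k => v (i, k)) ⬝ᵥ (S *ᵥ fun k => v (i, k))
      ≤ c * (v ⬝ᵥ v) := by
    calc ∑ i : Fin N, (fun k => v (i, k)) ⬝ᵥ (S *ᵥ fun k => v (i, k))
        ≤ ∑ i : Fin N, c * ((fun k => v (i, k)) ⬝ᵥ (fun k => v (i, k))) :=
          Finset.sum_le_sum fun i _ => hq_le i
      _ = c * (v ⬝ᵥ v) := by
          rw [← Finset.mul_sum]
          congr 1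
          simp [dotProduct, Fintype.sum_prod_type]
  -- combine
  have hlam0 : lam ≤ 0 := le_of_lt hmin
  have hkey : lam * (c * (v ⬝ᵥ v)) ≤ μ * (v ⬝ᵥ v) := by
    have h1 : lam * (c * (v ⬝ᵥ v)) ≤ lam * ∑ i : Fin N,
        (fun k => v (i, k)) ⬝ᵥ (S *ᵥ fun k => v (i, k)) :=
      mul_le_mul_of_nonpos_left hsum_le hlam0
    linarith
  have : lam * c ≤ μ := by
    have := (mul_le_mul_iff_of_pos_right hvv).mp (by linarith [hkey] : (lam * c) * (v ⬝ᵥ v) ≤ μ * (v ⬝ᵥ v))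
    exact this
  have habs : -(|lam| * c) = lam * c := by
    rw [abs_of_neg hmin]; ring
  linarith [habs ▸ this]
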